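/- Every 4×4 real skew-symmetric matrix X admits a unique decomposition X = A + B, where A is the matrix (in the basis {1, i, j, k} of ℍ) of left multiplication v ↦ a * v by a purely imaginary quaternion a, and B is the matrix of right multiplication v ↦ v * b by a purely imaginary quaternion b; moreover A and B commute: A * B = B * A. This realizes the Lie algebra decomposition so(4) ≅ su(2) ⊕ su(2). -/

import Mathlib

open Matrix

/-- The 4×4 real matrix (in the basis `{1, i, j, k}` of `ℍ`) of left
multiplication `v ↦ a * v` by a quaternion `a`. -/
noncomputable def quatLeftMulMatrix (a : Quaternion ℝ) : Matrix (Fin 4) (Fin 4) ℝ :=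
  LinearMap.toMatrix
    (QuaternionAlgebra.basisOneIJK (-1 : ℝ) 0 (-1))
    (QuaternionAlgebra.basisOneIJK (-1 : ℝ) 0 (-1))
    (LinearMap.mulLeft ℝ a)

/-- The 4×4 real matrix (in the basis `{1, i, j, k}` of `ℍ`) of right
multiplication `v ↦ v * b` by a quaternion `b`. -/
noncomputable def quatRightMulMatrix (b : Quaternion ℝ) : Matrix (Fin 4) (Fin 4) ℝ :=
  LinearMap.toMatrix
    (QuaternionAlgebra.basisOneIJK (-1 : ℝ) 0 (-1))
    (QuaternionAlgebra.basisOneIJK (-1 : ℝ) 0 (-1))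
    (LinearMap.mulRight ℝ b)

lemma quatLeftMulMatrix_eq (a : Quaternion ℝ) : quatLeftMulMatrix a =
    !![a.re, -a.imI, -a.imJ, -a.imK;
       a.imI, a.re, -a.imK, a.imJ;
       a.imJ, a.imK, a.re, -a.imI;
       a.imK, -a.imJ, a.imI, a.re] := by
  obtain ⟨r, x, y, z⟩ := a
  ext i j
  fin_cases i <;> fin_cases j <;>
    simp [quatLeftMulMatrix, LinearMap.toMatrix_apply, QuaternionAlgebra.basisOneIJK,
      Module.Basis.coe_ofEquivFun, QuaternionAlgebra.equivTuple, LinearMap.mulLeft,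
      AddMonoidHom.mulLeft, QuaternionAlgebra.mk_mul_mk]

lemma quatRightMulMatrix_eq (b : Quaternion ℝ) : quatRightMulMatrix b =
    !![b.re, -b.imI, -b.imJ, -b.imK;
       b.imI, b.re, b.imK, -b.imJ;
       b.imJ, -b.imK, b.re, b.imI;
       b.imK, b.imJ, -b.imI, b.re] := by
  obtain ⟨r, x, y, z⟩ := b
  ext i j
  fin_cases i <;> fin_cases j <;>
    simp [quatRightMulMatrix, LinearMap.toMatrix_apply, QuaternionAlgebra.basisOneIJK,
      Module.Basis.coe_ofEquivFun, QuaternionAlgebra.equivTuple, LinearMap.mulRight,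
      AddMonoidHom.mulRight, QuaternionAlgebra.mk_mul_mk]

lemma quatLR_comm (a b : Quaternion ℝ) :
    quatLeftMulMatrix a * quatRightMulMatrix b = quatRightMulMatrix b * quatLeftMulMatrix a := by
  unfold quatLeftMulMatrix quatRightMulMatrix
  rw [← LinearMap.toMatrix_comp, ← LinearMap.toMatrix_comp]
  congr 1
  exact LinearMap.ext fun v => by
    simp [LinearMap.mulLeft, LinearMap.mulRight]
    exact (mul_assoc (a : Quaternion ℝ) (v : Quaternion ℝ) b).symm

/-- Every 4×4 real skew-symmetric matrix `X` decomposes uniquely as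
`X = A + B`, where `A` is the matrix of left multiplication by a purely
imaginary quaternion and `B` is the matrix of right multiplication by a purely
imaginary quaternion; moreover `A` and `B` commute. This realizes
`so(4) ≅ su(2) ⊕ su(2)`. -/
theorem so4_isoclinic_lie_algebra_decomposition
    (X : Matrix (Fin 4) (Fin 4) ℝ) (hX : Xᵀ = -X) :
    ∃! p : Quaternion ℝ × Quaternion ℝ,
      p.1.re = 0 ∧ p.2.re = 0 ∧
      X = quatLeftMulMatrix p.1 + quatRightMulMatrix p.2 ∧
      quatLeftMulMatrix p.1 * quatRightMulMatrix p.2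
        = quatRightMulMatrix p.2 * quatLeftMulMatrix p.1 := by
  have hs : ∀ i j, X j i = - X i j := by
    intro i j
    have := congrFun (congrFun hX i) j
    simpa [Matrix.transpose_apply] using this
  refine ⟨(⟨0, (X 1 0 + X 3 2)/2, (X 2 0 + X 1 3)/2, (X 3 0 + X 2 1)/2⟩,
          ⟨0, (X 1 0 - X 3 2)/2, (X 2 0 - X 1 3)/2, (X 3 0 - X 2 1)/2⟩),
    ⟨rfl, rfl, ?_, quatLR_comm _ _⟩, ?_⟩
  · rw [quatLeftMulMatrix_eq, quatRightMulMatrix_eq]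
    ext i j
    fin_cases i <;> fin_cases j <;>
      simp <;>
      linarith [hs 0 0, hs 1 1, hs 2 2, hs 3 3, hs 0 1, hs 0 2, hs 0 3, hs 1 2, hs 1 3, hs 2 3]
  · rintro ⟨a, b⟩ ⟨ha, hb, hAB, -⟩
    rw [quatLeftMulMatrix_eq, quatRightMulMatrix_eq] at hAB
    have e : ∀ i j, X i j = _ := fun i j => congrFun (congrFun hAB i) j
    have e10 := e 1 0; have e32 := e 3 2
    have e20 := e 2 0; have e13 := e 1 3
    have e30 := e 3 0; have e21 := e 2 1
    simp at e10 e32 e20 e13 e30 e21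
    ext <;> simp [ha, hb] <;> linarith
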